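/- Define, for non-negative integers $n$ and $k$ with $k \le n$, $F(n,k) = (-1)^{n+k} \frac{(4n-1)(-\frac{1}{2})_n^2\,(-\frac{1}{2})_{n+k}}{(1)_n^2\,(1)_{n-k}\,(-\frac{1}{2})_k^2}$ and $G(n,k) = (-1)^{n+k} \frac{2(-\frac{1}{2})_n^2\,(-\frac{1}{2})_{n+k-1}}{(1)_{n-1}^2\,(1)_{n-k}\,(-\frac{1}{2})_k^2}$, with the convention that $F(n,k) = 0$ when $k > n$ and $G(n,k) = 0$ when $k > n$ or $n = 0$. Then for all $n \ge 0$ and $k \ge 1$: $F(n,k-1) - F(n,k) = G(n+1,k) - G(n,k)$. -/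

import Mathlib

open Finset

/-- Pochhammer symbol `(a)_k = a(a+1)⋯(a+k-1)` for a rational `a`. -/
def poch (a : ℚ) (k : ℕ) : ℚ := ∏ i ∈ Finset.range k, (a + i)

/-- Euler numbers, defined by `∑ E_n x^n/n! = 2e^x/(e^{2x}+1) = sech x`. -/
def eulerNumber : ℕ → ℤ
  | 0 => 1
  | n + 1 =>
    -∑ k ∈ (Finset.range (n + 1)).attach,
      if Even (n + 1 - k.1) then ((n + 1).choose k.1 : ℤ) * eulerNumber k.1 else 0
  decreasing_by exact Finset.mem_range.mp k.2

/-- `x ≡ y (mod p^m)` for rationals: `v_p(x - y) ≥ m` (with `x = y` allowed). -/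
def ratCongr (p m : ℕ) (x y : ℚ) : Prop :=
  x = y ∨ (m : ℤ) ≤ padicValRat p (x - y)

/-- The WZ function `F(n,k)`, with `F(n,k) = 0` for `k > n`. -/
noncomputable def wzF (n k : ℕ) : ℚ :=
  if k ≤ n then
    (-1 : ℚ) ^ (n + k) * ((4 * n - 1) * poch (-(1/2)) n ^ 2 * poch (-(1/2)) (n + k)) /
      ((n.factorial : ℚ) ^ 2 * ((n - k).factorial : ℚ) * poch (-(1/2)) k ^ 2)
  else 0

/-- The WZ function `G(n,k)`, with `G(n,k) = 0` for `k > n` or `n = 0`. -/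
noncomputable def wzG (n k : ℕ) : ℚ :=
  if k ≤ n ∧ n ≠ 0 then
    (-1 : ℚ) ^ (n + k) * (2 * poch (-(1/2)) n ^ 2 * poch (-(1/2)) (n + k - 1)) /
      (((n - 1).factorial : ℚ) ^ 2 * ((n - k).factorial : ℚ) * poch (-(1/2)) k ^ 2)
  else 0


lemma poch_succ (a : ℚ) (k : ℕ) : poch a (k+1) = poch a k * (a + k) :=
  Finset.prod_range_succ _ _

lemma poch_half_ne_zero (k : ℕ) : poch (-(1/2)) k ≠ 0 := by
  unfold poch
  refine Finset.prod_ne_zero_iff.mpr fun i _ => ?_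
  intro h
  have h3 : ((2*i : ℕ) : ℚ) = ((1:ℕ):ℚ) := by push_cast; linarith
  have := Nat.cast_injective h3
  omega

lemma fact_ne (m : ℕ) : ((m.factorial : ℚ)) ≠ 0 :=
  Nat.cast_ne_zero.mpr (Nat.factorial_ne_zero m)

lemma den_ne (a b c : ℕ) : ((a.factorial : ℚ))^2 * (b.factorial : ℚ) * poch (-(1/2)) c ^ 2 ≠ 0 :=
  mul_ne_zero (mul_ne_zero (pow_ne_zero _ (fact_ne a)) (fact_ne b))
    (pow_ne_zero _ (poch_half_ne_zero c))

theorem stmt7 (n k : ℕ) (hk : 1 ≤ k) :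
    wzF n (k - 1) - wzF n k = wzG (n + 1) k - wzG n k := by
  obtain ⟨j, rfl⟩ : ∃ j, k = j + 1 := ⟨k - 1, by omega⟩
  simp only [Nat.add_sub_cancel]
  rcases lt_trichotomy n j with hnj | rfl | hjn
  · rw [wzF, wzG, wzF, wzG, if_neg (by omega), if_neg (by omega),
      if_neg (by simp; omega), if_neg (by simp; omega)]
  · rw [wzF, wzG, wzF, wzG, if_pos le_rfl, if_neg (by omega),
      if_pos (by simp), if_neg (by simp), sub_zero, sub_zero]
    have e1 : n + 1 + (n + 1) - 1 = (n + n) + 1 := by omega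
    have e2 : n + 1 + (n + 1) = (n + n) + 1 + 1 := by omega
    have e3 : n + 1 - (n + 1) = 0 := by omega
    have e4 : n - n = 0 := by omega
    have e5 : n + 1 - 1 = n := by omega
    rw [e1, e2, e3, e4, e5, div_eq_div_iff (den_ne _ _ _) (den_ne _ _ _),
      poch_succ (-(1/2)) (n+n), poch_succ (-(1/2)) n]
    push_cast
    simp only [pow_succ]
    ring
  · obtain ⟨d, rfl⟩ : ∃ d, n = d + j + 1 := ⟨n - j - 1, by omega⟩
    rw [wzF, wzG, wzF, wzG, if_pos (by omega), if_pos (by omega),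
      if_pos (by constructor <;> omega), if_pos (by constructor <;> omega)]
    have e1 : d + j + 1 + j = (d + j + j) + 1 := by omega
    have e2 : d + j + 1 - j = d + 1 := by omega
    have e8 : d + j + 1 + (j + 1) - 1 = (d + j + j) + 1 := by omega
    have e3 : d + j + 1 + (j + 1) = ((d + j + j) + 1) + 1 := by omega
    have e4 : d + j + 1 - (j + 1) = d := by omega
    have e5 : d + j + 1 + 1 + (j + 1) - 1 = ((d + j + j) + 1) + 1 := by omega
    have e6 : d + j + 1 + 1 - (j + 1) = d + 1 := by omega
    have e7 : d + j + 1 + 1 - 1 = (d + j) + 1 := by omega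
    have e9 : d + j + 1 - 1 = d + j := by omega
    have e10 : d + j + 1 + 1 + (j + 1) = ((d + j + j) + 1) + 1 + 1 := by omega
    rw [e5, e10, e8, e1, e2, e3, e4, e6, e7, e9]
    rw [div_sub_div _ _ (den_ne _ _ _) (den_ne _ _ _),
      div_sub_div _ _ (den_ne _ _ _) (den_ne _ _ _),
      div_eq_div_iff (mul_ne_zero (den_ne _ _ _) (den_ne _ _ _))
        (mul_ne_zero (den_ne _ _ _) (den_ne _ _ _))]
    rw [poch_succ (-(1/2)) ((d+j+j)+1), poch_succ (-(1/2)) (d+j+j),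
      poch_succ (-(1/2)) j, poch_succ (-(1/2)) (d+j+1), poch_succ (-(1/2)) (d+j),
      Nat.factorial_succ (d+j), Nat.factorial_succ d]
    push_cast
    simp only [pow_succ]
    ring
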